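/- Let (S, Σ, λ) be a measure space with λ(S) > 0 and let r : S → [1,∞) be measurable with 1 < r_- := ess inf r ≤ r_+ := ess sup r < ∞. Then for all measurable f, g : S → ℝ with g(s) ≠ 0 a.e., max{ ‖fg‖₁^{1/r_-}, ‖fg‖₁^{1/r_+} } ≥ [1/r_- + 1/r'_-]^{-1} · ‖ |f|^{1/r(·)} ‖₁ · min{ ‖ |g|^{−1/(r(·)−1)} ‖₁^{(1−r_+)/r_-}, ‖ |g|^{−1/(r(·)−1)} ‖₁^{(1−r_-)/r_+} }, where r'_- is defined by 1/r_- + 1/r'_- = 1 and ‖·‖₁ denotes the L¹-norm. -/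

import Mathlib

open MeasureTheory ENNReal


private lemma rh_pointwise (rm rp r'm t T ρ a b : ℝ) (h1 : 1 < rm) (hle : rm ≤ rp)
    (hr'm : r'm = rp / (rp - 1)) (ht : 0 < t) (htT : t ^ (-(1:ℝ)/(ρ-1)) ≤ T)
    (hρ1 : rm ≤ ρ) (hρ2 : ρ ≤ rp) (hb : b ≠ 0) :
    |a| ^ (1/ρ) ≤ (1/rm * t) * |a * b| + (1/r'm * T) * |b| ^ (-(1:ℝ)/(ρ - 1)) := by
  have hρ : 1 < ρ := lt_of_lt_of_le h1 hρ1
  have hρ0 : 0 < ρ := by linarith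
  have hρ1' : ρ - 1 ≠ 0 := by intro h; nlinarith [h]
  have hrp1 : 1 < rp := lt_of_lt_of_le h1 hle
  have hb' : 0 < |b| := abs_pos.mpr hb
  have htb : 0 < t * |b| := by positivity
  set e : ℝ := -(1:ℝ)/(ρ-1) with he
  have hxnn : (0:ℝ) ≤ t * |a * b| := by positivity
  have hynn : (0:ℝ) < (t * |b|) ^ e := Real.rpow_pos_of_pos htb _
  have hw1 : (0:ℝ) ≤ 1/ρ := by positivity
  have hw2 : (0:ℝ) ≤ 1 - 1/ρ := by
    have : 1/ρ ≤ 1 := by rw [div_le_one hρ0]; linarith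
    linarith
  have young := Real.geom_mean_le_arith_mean2_weighted hw1 hw2 hxnn hynn.le (by ring)
  have hkey : (t * |a * b|) ^ (1/ρ) * ((t * |b|) ^ e) ^ (1 - 1/ρ) = |a| ^ (1/ρ) := by
    rw [← Real.rpow_mul htb.le]
    have : e * (1 - 1/ρ) = -(1/ρ) := by
      rw [he]; field_simp
    rw [this, Real.rpow_neg htb.le, ← div_eq_mul_inv, ← Real.div_rpow hxnn htb.le]
    congr 1
    rw [abs_mul]
    field_simp
  rw [hkey] at young
  refine le_trans young (add_le_add ?_ ?_)
  · rw [mul_assoc]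
    apply mul_le_mul_of_nonneg_right _ hxnn
    rw [div_le_div_iff₀ hρ0 (by linarith : (0:ℝ) < rm)]
    linarith
  · have hTnn : 0 ≤ T := le_trans (Real.rpow_pos_of_pos ht _).le htT
    have hmul : (t * |b|) ^ e = t ^ e * |b| ^ e := Real.mul_rpow ht.le hb'.le
    rw [hmul]
    have hr'm0 : (0:ℝ) < r'm := by
      rw [hr'm]; exact div_pos (by linarith) (by linarith)
    have h1' : 1 - 1/ρ ≤ 1/r'm := by
      rw [hr'm, one_div_div]
      have h1 : 1/rp ≤ 1/ρ := by
        rw [div_le_div_iff₀ (by linarith : (0:ℝ) < rp) hρ0]; linarith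
      have h2 : (rp-1)/rp = 1 - 1/rp := by field_simp
      rw [h2]; linarith
    have hbe : (0:ℝ) ≤ |b| ^ e := (Real.rpow_pos_of_pos hb' _).le
    calc (1 - 1/ρ) * (t ^ e * |b| ^ e) ≤ (1/r'm) * (T * |b| ^ e) := by
          apply mul_le_mul h1' (mul_le_mul_of_nonneg_right htT hbe) (by positivity)
          positivity
      _ = (1/r'm * T) * |b| ^ e := by ring

private lemma rh_calc (q iR jR : ℝ) (hq : 1 < q) (hi : 0 < iR) (hj : 0 < jR) :
    ((jR/iR) ^ ((q-1)/q)) * iR = jR ^ ((q-1)/q) * iR ^ (1/q) ∧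
    ((jR/iR) ^ ((q-1)/q)) ^ (-(1:ℝ)/(q-1)) * jR = jR ^ ((q-1)/q) * iR ^ (1/q) := by
  have hq0 : (0:ℝ) < q := by linarith
  have hq1 : (0:ℝ) < q - 1 := by linarith
  constructor
  · rw [Real.div_rpow hj.le hi.le]
    have : iR ^ (1/q) = iR / iR ^ ((q-1)/q) := by
      rw [eq_div_iff (ne_of_gt (Real.rpow_pos_of_pos hi _)), ← Real.rpow_add hi,
        show 1/q + (q-1)/q = 1 by field_simp; ring, Real.rpow_one]
    rw [this]
    field_simp
  · rw [← Real.rpow_mul (by positivity : (0:ℝ) ≤ jR/iR)]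
    have : (q-1)/q * (-(1:ℝ)/(q-1)) = -(1/q) := by field_simp
    rw [this, Real.rpow_neg (by positivity), ← Real.inv_rpow (by positivity),
      inv_div, Real.div_rpow hi.le hj.le]
    have : jR ^ ((q-1)/q) = jR / jR ^ (1/q) := by
      rw [eq_div_iff (ne_of_gt (Real.rpow_pos_of_pos hj _)), ← Real.rpow_add hj,
        show (q-1)/q + 1/q = 1 by field_simp; ring, Real.rpow_one]
    rw [this]
    field_simp

private lemma rh_core (rm rp iR jR : ℝ) (h1 : 1 < rm) (hle : rm ≤ rp)
    (hi : 0 < iR) (hj : 0 < jR) :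
    ∃ t T : ℝ, 0 < t ∧ 0 < T ∧ (∀ ρ, rm ≤ ρ → ρ ≤ rp → t ^ (-(1:ℝ)/(ρ-1)) ≤ T) ∧
      max (t * iR) (T * jR) * min (jR ^ ((1-rp)/rm)) (jR ^ ((1-rm)/rp)) ≤
        max (iR ^ (1/rm)) (iR ^ (1/rp)) := by
  have hrp1 : 1 < rp := lt_of_lt_of_le h1 hle
  have hrm0 : (0:ℝ) < rm := by linarith
  have hrp0 : (0:ℝ) < rp := by linarith
  rcases le_total iR jR with hij | hij
  · set γ : ℝ := (rp-1)/rp with hγ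
    have hγ0 : 0 < γ := div_pos (by linarith) hrp0
    set t : ℝ := (jR/iR) ^ γ with htdef
    have hquot : 1 ≤ jR/iR := (one_le_div hi).mpr hij
    have ht0 : 0 < t := Real.rpow_pos_of_pos (by positivity) _
    have ht1 : 1 ≤ t := Real.one_le_rpow hquot hγ0.le
    refine ⟨t, t ^ (-(1:ℝ)/(rp-1)), ht0, Real.rpow_pos_of_pos ht0 _, ?_, ?_⟩
    · intro ρ hρ1 hρ2
      apply Real.rpow_le_rpow_of_exponent_le ht1
      have hρ : 1 < ρ := lt_of_lt_of_le h1 hρ1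
      rw [div_le_div_iff₀ (by linarith : (0:ℝ) < ρ - 1) (by linarith : (0:ℝ) < rp - 1)]
      nlinarith
    · obtain ⟨hc1, hc2⟩ := rh_calc rp iR jR hrp1 hi hj
      rw [htdef] at *
      rw [hc1, hc2, max_self]
      have key : jR ^ γ * min (jR ^ ((1-rp)/rm)) (jR ^ ((1-rm)/rp)) ≤ 1 := by
        rcases le_total 1 jR with hj1 | hj1
        · calc jR ^ γ * min (jR ^ ((1-rp)/rm)) (jR ^ ((1-rm)/rp))
              ≤ jR ^ γ * jR ^ ((1-rp)/rm) := by
                exact mul_le_mul_of_nonneg_left (min_le_left _ _) (Real.rpow_nonneg hj.le _)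
            _ = jR ^ (γ + (1-rp)/rm) := (Real.rpow_add hj _ _).symm
            _ ≤ 1 := by
                apply Real.rpow_le_one_of_one_le_of_nonpos hj1
                rw [hγ, div_add_div _ _ (ne_of_gt hrp0) (ne_of_gt hrm0)]
                apply div_nonpos_of_nonpos_of_nonneg _ (by positivity)
                nlinarith
        · calc jR ^ γ * min (jR ^ ((1-rp)/rm)) (jR ^ ((1-rm)/rp))
              ≤ jR ^ γ * jR ^ ((1-rm)/rp) := by
                exact mul_le_mul_of_nonneg_left (min_le_right _ _) (Real.rpow_nonneg hj.le _)
            _ = jR ^ (γ + (1-rm)/rp) := (Real.rpow_add hj _ _).symm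
            _ ≤ 1 := by
                apply Real.rpow_le_one hj.le hj1
                rw [hγ]
                have : (rp-1)/rp + (1-rm)/rp = (rp-rm)/rp := by ring
                rw [this]
                exact div_nonneg (by linarith) hrp0.le
      calc jR ^ γ * iR ^ (1/rp) * min (jR ^ ((1-rp)/rm)) (jR ^ ((1-rm)/rp))
          = (jR ^ γ * min (jR ^ ((1-rp)/rm)) (jR ^ ((1-rm)/rp))) * iR ^ (1/rp) := by ring
        _ ≤ 1 * iR ^ (1/rp) :=
            mul_le_mul_of_nonneg_right key (Real.rpow_nonneg hi.le _)
        _ = iR ^ (1/rp) := one_mul _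
        _ ≤ _ := le_max_right _ _
  · set γ : ℝ := (rm-1)/rm with hγ
    have hγ0 : 0 < γ := div_pos (by linarith) hrm0
    set t : ℝ := (jR/iR) ^ γ with htdef
    have hquot : jR/iR ≤ 1 := (div_le_one hi).mpr hij
    have ht0 : 0 < t := Real.rpow_pos_of_pos (by positivity) _
    have ht1 : t ≤ 1 := Real.rpow_le_one (by positivity) hquot hγ0.le
    refine ⟨t, t ^ (-(1:ℝ)/(rm-1)), ht0, Real.rpow_pos_of_pos ht0 _, ?_, ?_⟩
    · intro ρ hρ1 hρ2
      apply Real.rpow_le_rpow_of_exponent_ge ht0 ht1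
      have hρ : 1 < ρ := lt_of_lt_of_le h1 hρ1
      rw [div_le_div_iff₀ (by linarith : (0:ℝ) < rm - 1) (by linarith : (0:ℝ) < ρ - 1)]
      nlinarith
    · obtain ⟨hc1, hc2⟩ := rh_calc rm iR jR h1 hi hj
      rw [htdef] at *
      rw [hc1, hc2, max_self]
      have key : jR ^ γ * min (jR ^ ((1-rp)/rm)) (jR ^ ((1-rm)/rp)) ≤ 1 := by
        rcases le_total 1 jR with hj1 | hj1
        · calc jR ^ γ * min (jR ^ ((1-rp)/rm)) (jR ^ ((1-rm)/rp))
              ≤ jR ^ γ * jR ^ ((1-rp)/rm) := by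
                exact mul_le_mul_of_nonneg_left (min_le_left _ _) (Real.rpow_nonneg hj.le _)
            _ = jR ^ (γ + (1-rp)/rm) := (Real.rpow_add hj _ _).symm
            _ ≤ 1 := by
                apply Real.rpow_le_one_of_one_le_of_nonpos hj1
                rw [hγ]
                have : (rm-1)/rm + (1-rp)/rm = (rm-rp)/rm := by ring
                rw [this]
                apply div_nonpos_of_nonpos_of_nonneg (by linarith) hrm0.le
        · calc jR ^ γ * min (jR ^ ((1-rp)/rm)) (jR ^ ((1-rm)/rp))
              ≤ jR ^ γ * jR ^ ((1-rm)/rp) := by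
                exact mul_le_mul_of_nonneg_left (min_le_right _ _) (Real.rpow_nonneg hj.le _)
            _ = jR ^ (γ + (1-rm)/rp) := (Real.rpow_add hj _ _).symm
            _ ≤ 1 := by
                apply Real.rpow_le_one hj.le hj1
                rw [hγ, div_add_div _ _ (ne_of_gt hrm0) (ne_of_gt hrp0)]
                apply div_nonneg _ (by positivity)
                nlinarith
      calc jR ^ γ * iR ^ (1/rm) * min (jR ^ ((1-rp)/rm)) (jR ^ ((1-rm)/rp))
          = (jR ^ γ * min (jR ^ ((1-rp)/rm)) (jR ^ ((1-rm)/rp))) * iR ^ (1/rm) := by ring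
        _ ≤ 1 * iR ^ (1/rm) :=
            mul_le_mul_of_nonneg_right key (Real.rpow_nonneg hi.le _)
        _ = iR ^ (1/rm) := one_mul _
        _ ≤ _ := le_max_left _ _

set_option maxHeartbeats 1000000 in
/-- Reverse Hölder inequality with variable exponent. -/
theorem reverse_hoelder_variable_exponent {S : Type*} [MeasurableSpace S]
    (ν : Measure S) (hν : 0 < ν Set.univ)
    (r : S → ℝ) (hr : Measurable r)
    (rm rp r'm : ℝ) (hrm : 1 < rm)
    (hbounds : ∀ᵐ s ∂ν, rm ≤ r s ∧ r s ≤ rp)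
    (hr'm : r'm = rp / (rp - 1))
    (f g : S → ℝ) (hf : Measurable f) (hg : Measurable g)
    (hg0 : ∀ᵐ s ∂ν, g s ≠ 0) :
    ENNReal.ofReal ((1 / rm + 1 / r'm)⁻¹) *
        (∫⁻ s, ENNReal.ofReal (|f s| ^ (1 / r s)) ∂ν) *
        min ((∫⁻ s, ENNReal.ofReal (|g s| ^ (-(1 : ℝ) / (r s - 1))) ∂ν) ^ ((1 - rp) / rm))
            ((∫⁻ s, ENNReal.ofReal (|g s| ^ (-(1 : ℝ) / (r s - 1))) ∂ν) ^ ((1 - rm) / rp)) ≤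
      max ((∫⁻ s, ENNReal.ofReal |f s * g s| ∂ν) ^ (1 / rm))
          ((∫⁻ s, ENNReal.ofReal |f s * g s| ∂ν) ^ (1 / rp)) := by
  have hν' : ν ≠ 0 := by
    intro h; rw [h] at hν; simp at hν
  haveI : (MeasureTheory.ae ν).NeBot := ae_neBot.mpr hν'
  obtain ⟨s₀, hs₀⟩ := hbounds.exists
  have hle : rm ≤ rp := hs₀.1.trans hs₀.2
  have hrp1 : 1 < rp := lt_of_lt_of_le hrm hle
  have hrm0 : (0:ℝ) < rm := by linarith
  have hrp0 : (0:ℝ) < rp := by linarith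
  have hr'm0 : (0:ℝ) < r'm := by
    rw [hr'm]; exact div_pos (by linarith) (by linarith)
  set I := ∫⁻ s, ENNReal.ofReal |f s * g s| ∂ν with hIdef
  set J := ∫⁻ s, ENNReal.ofReal (|g s| ^ (-(1 : ℝ) / (r s - 1))) ∂ν with hJdef
  set F := ∫⁻ s, ENNReal.ofReal (|f s| ^ (1 / r s)) ∂ν with hFdef
  have mfg : Measurable fun s => ENNReal.ofReal |f s * g s| :=
    ((hf.mul hg).abs).ennreal_ofReal
  have mj : Measurable fun s => ENNReal.ofReal (|g s| ^ (-(1 : ℝ) / (r s - 1))) := by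
    measurability
  have mf1 : Measurable fun s => ENNReal.ofReal (|f s| ^ (1 / r s)) := by
    measurability
  have hJ0 : J ≠ 0 := by
    intro h0
    rw [hJdef, lintegral_eq_zero_iff mj] at h0
    obtain ⟨s₁, hgs, heq⟩ := (hg0.and h0).exists
    have hpos : (0:ℝ) < |g s₁| ^ (-(1 : ℝ) / (r s₁ - 1)) :=
      Real.rpow_pos_of_pos (abs_pos.mpr hgs) _
    simp only [Pi.zero_apply, ENNReal.ofReal_eq_zero] at heq
    linarith
  rcases eq_or_ne I ⊤ with hItop | hItop
  · rw [hItop, ENNReal.top_rpow_of_pos (by positivity : (0:ℝ) < 1/rm)]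
    exact le_trans le_top (le_max_left _ _)
  rcases eq_or_ne I 0 with hI0 | hI0
  · have hfg0 : ∀ᵐ s ∂ν, f s * g s = 0 := by
      rw [hIdef, lintegral_eq_zero_iff mfg] at hI0
      filter_upwards [hI0] with s hs
      simp only [Pi.zero_apply, ENNReal.ofReal_eq_zero] at hs
      exact abs_nonpos_iff.mp hs
    have hF0 : F = 0 := by
      rw [hFdef, lintegral_eq_zero_iff mf1]
      filter_upwards [hfg0, hg0, hbounds] with s h1 h2 h3
      have hf0 : f s = 0 := by
        rcases mul_eq_zero.mp h1 with h | h
        · exact h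
        · exact absurd h h2
      have hne : (1 / r s) ≠ 0 := by
        have : (0:ℝ) < r s := by linarith [h3.1]
        positivity
      simp only [Pi.zero_apply, hf0, abs_zero, Real.zero_rpow hne, ENNReal.ofReal_zero]
    rw [hF0, mul_zero, zero_mul]
    exact zero_le
  rcases eq_or_ne J ⊤ with hJtop | hJtop
  · rw [hJtop, ENNReal.top_rpow_of_neg (by
        apply div_neg_of_neg_of_pos (by linarith) hrm0),
      ENNReal.top_rpow_of_neg (by
        apply div_neg_of_neg_of_pos (by linarith) hrp0)]
    simp
  -- main case
  set iR := I.toReal with hiRdef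
  set jR := J.toReal with hjRdef
  have hiR : 0 < iR := ENNReal.toReal_pos hI0 hItop
  have hjR : 0 < jR := ENNReal.toReal_pos hJ0 hJtop
  have hIe : I = ENNReal.ofReal iR := (ENNReal.ofReal_toReal hItop).symm
  have hJe : J = ENNReal.ofReal jR := (ENNReal.ofReal_toReal hJtop).symm
  obtain ⟨t, T, ht0, hT0, hprop, hineq⟩ := rh_core rm rp iR jR hrm hle hiR hjR
  have hptwise : ∀ᵐ s ∂ν, ENNReal.ofReal (|f s| ^ (1 / r s)) ≤
      ENNReal.ofReal (1/rm * t) * ENNReal.ofReal |f s * g s|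
      + ENNReal.ofReal (1/r'm * T) * ENNReal.ofReal (|g s| ^ (-(1 : ℝ) / (r s - 1))) := by
    filter_upwards [hbounds, hg0] with s hb hgs
    have key := rh_pointwise rm rp r'm t T (r s) (f s) (g s) hrm hle hr'm ht0
      (hprop _ hb.1 hb.2) hb.1 hb.2 hgs
    calc ENNReal.ofReal (|f s| ^ (1 / r s))
        ≤ ENNReal.ofReal ((1/rm * t) * |f s * g s|
            + (1/r'm * T) * |g s| ^ (-(1:ℝ)/(r s - 1))) := ENNReal.ofReal_le_ofReal key
      _ = _ := by
          rw [ENNReal.ofReal_add (by positivity)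
            (mul_nonneg (mul_nonneg (one_div_nonneg.mpr hr'm0.le) hT0.le)
              (Real.rpow_nonneg (abs_nonneg _) _)),
            ENNReal.ofReal_mul (q := |f s * g s|) (by positivity : (0:ℝ) ≤ 1/rm*t),
            ENNReal.ofReal_mul (q := |g s| ^ (-(1:ℝ)/(r s - 1)))
              (mul_nonneg (one_div_nonneg.mpr hr'm0.le) hT0.le)]
  set K := ENNReal.ofReal (max (t * iR) (T * jR)) with hKdef
  have hFle : F ≤ ENNReal.ofReal (1/rm + 1/r'm) * K := by
    have step1 : F ≤ ENNReal.ofReal (1/rm * t) * I + ENNReal.ofReal (1/r'm * T) * J := by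
      calc F ≤ ∫⁻ s, (ENNReal.ofReal (1/rm * t) * ENNReal.ofReal |f s * g s|
            + ENNReal.ofReal (1/r'm * T) *
              ENNReal.ofReal (|g s| ^ (-(1 : ℝ) / (r s - 1)))) ∂ν :=
            lintegral_mono_ae hptwise
        _ = _ := by
            rw [lintegral_add_left (mfg.const_mul _), lintegral_const_mul _ mfg,
              lintegral_const_mul _ mj]
    have e1 : ENNReal.ofReal (1/rm * t) * I = ENNReal.ofReal (1/rm) * ENNReal.ofReal (t * iR) := by
      rw [hIe, ← ENNReal.ofReal_mul (by positivity), ← ENNReal.ofReal_mul (by positivity)]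
      congr 1; ring
    have e2 : ENNReal.ofReal (1/r'm * T) * J =
        ENNReal.ofReal (1/r'm) * ENNReal.ofReal (T * jR) := by
      rw [hJe, ← ENNReal.ofReal_mul (by positivity), ← ENNReal.ofReal_mul (by positivity)]
      congr 1; ring
    calc F ≤ ENNReal.ofReal (1/rm * t) * I + ENNReal.ofReal (1/r'm * T) * J := step1
      _ = ENNReal.ofReal (1/rm) * ENNReal.ofReal (t * iR)
          + ENNReal.ofReal (1/r'm) * ENNReal.ofReal (T * jR) := by rw [e1, e2]
      _ ≤ ENNReal.ofReal (1/rm) * K + ENNReal.ofReal (1/r'm) * K := by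
          refine add_le_add ?_ ?_ <;>
            exact mul_le_mul_right (ENNReal.ofReal_le_ofReal (by
              first | exact le_max_left _ _ | exact le_max_right _ _)) _
      _ = ENNReal.ofReal (1/rm + 1/r'm) * K := by
          rw [ENNReal.ofReal_add (by positivity) (by positivity), add_mul]
  have hSig : (0:ℝ) < 1/rm + 1/r'm := by positivity
  have hCSig : ENNReal.ofReal ((1/rm + 1/r'm)⁻¹) * ENNReal.ofReal (1/rm + 1/r'm) = 1 := by
    rw [← ENNReal.ofReal_mul (by positivity), inv_mul_cancel₀ (ne_of_gt hSig),
      ENNReal.ofReal_one]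
  have hm : min (J ^ ((1 - rp) / rm)) (J ^ ((1 - rm) / rp)) =
      ENNReal.ofReal (min (jR ^ ((1-rp)/rm)) (jR ^ ((1-rm)/rp))) := by
    rw [hJe, ENNReal.ofReal_rpow_of_pos hjR, ENNReal.ofReal_rpow_of_pos hjR]
    exact (Monotone.map_min (fun _ _ h => ENNReal.ofReal_le_ofReal h)).symm
  have hM : max (I ^ (1 / rm)) (I ^ (1 / rp)) =
      ENNReal.ofReal (max (iR ^ (1/rm)) (iR ^ (1/rp))) := by
    rw [hIe, ENNReal.ofReal_rpow_of_pos hiR, ENNReal.ofReal_rpow_of_pos hiR]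
    exact (Monotone.map_max (fun _ _ h => ENNReal.ofReal_le_ofReal h)).symm
  calc ENNReal.ofReal ((1 / rm + 1 / r'm)⁻¹) * F *
        min (J ^ ((1 - rp) / rm)) (J ^ ((1 - rm) / rp))
      ≤ ENNReal.ofReal ((1 / rm + 1 / r'm)⁻¹) * (ENNReal.ofReal (1/rm + 1/r'm) * K) *
        min (J ^ ((1 - rp) / rm)) (J ^ ((1 - rm) / rp)) := by gcongr
    _ = (ENNReal.ofReal ((1 / rm + 1 / r'm)⁻¹) * ENNReal.ofReal (1/rm + 1/r'm)) *
        (K * min (J ^ ((1 - rp) / rm)) (J ^ ((1 - rm) / rp))) := by ring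
    _ = K * min (J ^ ((1 - rp) / rm)) (J ^ ((1 - rm) / rp)) := by rw [hCSig, one_mul]
    _ = ENNReal.ofReal (max (t * iR) (T * jR) *
          min (jR ^ ((1-rp)/rm)) (jR ^ ((1-rm)/rp))) := by
        rw [hm, hKdef, ← ENNReal.ofReal_mul
          (le_trans (mul_nonneg ht0.le hiR.le) (le_max_left _ _))]
    _ ≤ ENNReal.ofReal (max (iR ^ (1/rm)) (iR ^ (1/rp))) := ENNReal.ofReal_le_ofReal hineq
    _ = max (I ^ (1 / rm)) (I ^ (1 / rp)) := hM.symm
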